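/- Let (Eₘ) be a nested sequence of Banach spaces E = E₀ ⊃ E₁ ⊃ ... with compact inclusion Eₘ₊₁ → Eₘ, and similarly (Fₘ). Let U ⊂ E be open. Suppose f:U → F is sc⁰ and of class sc¹ (i.e., for each x ∈ U₁ there is a bounded linear Df(x):E₀ → F₀ such that |f(x+h)-f(x)-Df(x)h|₀ = o(|h|₁) and the tangent map Tf(x,h)=(f(x),Df(x)h) is sc⁰). Then for every m ≥ 1 the induced map f:Uₘ → F_{m-1} is continuously Fréchet differentiable (of class C¹), with derivative df(x) = Df(x)|_{Eₘ}. -/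

import Mathlib

open Asymptotics Filter MeasureTheory

section SCAux


variable {E F : ℕ → Type} [∀ m, NormedAddCommGroup (E m)] [∀ m, NormedSpace ℝ (E m)]
  [∀ m, NormedAddCommGroup (F m)] [∀ m, NormedSpace ℝ (F m)]

/-- Iterated inclusion `E (m+1) → E 1`. -/
noncomputable def scJ (ιE : ∀ m, E (m + 1) →L[ℝ] E m) : ∀ m, E (m + 1) →L[ℝ] E 1
  | 0 => ContinuousLinearMap.id ℝ (E 1)
  | (m + 1) => (scJ ιE m).comp (ιE (m + 1))

/-- Iterated inclusion `F m → F 0`. -/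
noncomputable def scP (ιF : ∀ m, F (m + 1) →L[ℝ] F m) : ∀ m, F m →L[ℝ] F 0
  | 0 => ContinuousLinearMap.id ℝ (F 0)
  | (m + 1) => (scP ιF m).comp (ιF m)

theorem scP_inj (ιF : ∀ m, F (m + 1) →L[ℝ] F m)
    (hinjF : ∀ m, Function.Injective (ιF m)) : ∀ m, Function.Injective (scP ιF m) := by
  intro m
  induction m with
  | zero => exact fun a b h => h
  | succ m ih =>
    intro a b h
    exact hinjF m (ih h)

theorem scP_succ_apply (ιE : ∀ m, E (m + 1) →L[ℝ] E m) :
    ∀ m, ∀ y : E (m + 1), scP ιE (m + 1) y = ιE 0 (scJ ιE m y) := by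
  intro m
  induction m with
  | zero => intro y; rfl
  | succ m ih => intro y; exact ih (ιE (m + 1) y)


end SCAux

section SCMain
set_option linter.unusedSectionVars false


variable {E F : ℕ → Type} [∀ m, NormedAddCommGroup (E m)] [∀ m, NormedSpace ℝ (E m)]
  [∀ m, NormedAddCommGroup (F m)] [∀ m, NormedSpace ℝ (F m)]
  [∀ m, CompleteSpace (E m)] [∀ m, CompleteSpace (F m)]
  {ιE : ∀ m, E (m + 1) →L[ℝ] E m} {ιF : ∀ m, F (m + 1) →L[ℝ] F m}
  {U : ∀ m, Set (E m)} {f : ∀ m, E m → F m} {Df : ∀ m, E (m + 1) → E m →L[ℝ] F m}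

theorem sc_Uopen (hU0 : IsOpen (U 0)) (hU : ∀ m, U (m + 1) = ιE m ⁻¹' U m) :
    ∀ m, IsOpen (U m) := by
  intro m
  induction m with
  | zero => exact hU0
  | succ m ih => exact (hU m) ▸ ih.preimage (ιE m).continuous

theorem sc_memU1 (hU : ∀ m, U (m + 1) = ιE m ⁻¹' U m) :
    ∀ m, ∀ x ∈ U (m + 1), scJ ιE m x ∈ U 1 := by
  intro m
  induction m with
  | zero => exact fun x hx => hx
  | succ m ih =>
    intro x hx
    rw [hU (m + 1)] at hx
    exact ih (ιE (m + 1) x) hx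

theorem sc_pf_f (hU : ∀ m, U (m + 1) = ιE m ⁻¹' U m)
    (hcompat : ∀ m, ∀ x ∈ U (m + 1), ιF m (f (m + 1) x) = f m (ιE m x)) :
    ∀ m, ∀ x ∈ U m, scP ιF m (f m x) = f 0 (scP ιE m x) := by
  intro m
  induction m with
  | zero => intro x _; rfl
  | succ m ih =>
    intro x hx
    have hx' : ιE m x ∈ U m := by rw [hU m] at hx; exact hx
    calc scP ιF (m + 1) (f (m + 1) x) = scP ιF m (ιF m (f (m + 1) x)) := rfl
      _ = scP ιF m (f m (ιE m x)) := by rw [hcompat m x hx]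
      _ = f 0 (scP ιE m (ιE m x)) := ih (ιE m x) hx'
      _ = f 0 (scP ιE (m + 1) x) := rfl

theorem sc_pf_Df (hU : ∀ m, U (m + 1) = ιE m ⁻¹' U m)
    (hDfcompat : ∀ m, ∀ x ∈ U (m + 2), ∀ h : E (m + 1),
      ιF m (Df (m + 1) x h) = Df m (ιE (m + 1) x) (ιE m h)) :
    ∀ m, ∀ x ∈ U (m + 1), ∀ h : E m,
      scP ιF m (Df m x h) = Df 0 (scJ ιE m x) (scP ιE m h) := by
  intro m
  induction m with
  | zero => intro x _ h; rfl
  | succ m ih =>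
    intro x hx h
    have hx' : ιE (m + 1) x ∈ U (m + 1) := by rw [hU (m + 1)] at hx; exact hx
    calc scP ιF (m + 1) (Df (m + 1) x h)
        = scP ιF m (ιF m (Df (m + 1) x h)) := rfl
      _ = scP ιF m (Df m (ιE (m + 1) x) (ιE m h)) := by rw [hDfcompat m x hx]
      _ = Df 0 (scJ ιE m (ιE (m + 1) x)) (scP ιE m (ιE m h)) := ih (ιE (m + 1) x) hx' (ιE m h)
      _ = Df 0 (scJ ιE (m + 1) x) (scP ιE (m + 1) h) := rfl

theorem sc_lvl0
    (happrox : ∀ x ∈ U 1,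
      (fun h : E 1 => f 0 (ιE 0 x + ιE 0 h) - f 0 (ιE 0 x) - Df 0 x (ιE 0 h))
        =o[nhds (0 : E 1)] fun h : E 1 => h) :
    ∀ z ∈ U 1, HasFDerivAt (fun y : E 1 => f 0 (ιE 0 y)) ((Df 0 z).comp (ιE 0)) z := by
  intro z hz
  rw [hasFDerivAt_iff_isLittleO_nhds_zero]
  simpa [map_add] using happrox z hz


theorem sc_key
    (hinjF : ∀ m, Function.Injective (ιF m))
    (hU0 : IsOpen (U 0)) (hU : ∀ m, U (m + 1) = ιE m ⁻¹' U m)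
    (hcompat : ∀ m, ∀ x ∈ U (m + 1), ιF m (f (m + 1) x) = f m (ιE m x))
    (hDfcompat : ∀ m, ∀ x ∈ U (m + 2), ∀ h : E (m + 1),
      ιF m (Df (m + 1) x h) = Df m (ιE (m + 1) x) (ιE m h))
    (happrox : ∀ x ∈ U 1,
      (fun h : E 1 => f 0 (ιE 0 x + ιE 0 h) - f 0 (ιE 0 x) - Df 0 x (ιE 0 h))
        =o[nhds (0 : E 1)] fun h : E 1 => h)
    (hTsc0 : ∀ m, ContinuousOn (fun p : E (m + 1) × E m => Df m p.1 p.2)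
      (U (m + 1) ×ˢ Set.univ))
    (m : ℕ) (x h : E (m + 1))
    (hseg : ∀ t ∈ Set.Icc (0 : ℝ) 1, x + t • h ∈ U (m + 1)) :
    f m (ιE m (x + h)) - f m (ιE m x) - Df m x (ιE m h)
      = ∫ t in (0 : ℝ)..1, (Df m (x + t • h) (ιE m h) - Df m x (ιE m h)) := by
  have hx : x ∈ U (m + 1) := by simpa using hseg 0 ⟨le_refl 0, zero_le_one⟩
  have hxh : x + h ∈ U (m + 1) := by simpa using hseg 1 ⟨zero_le_one, le_refl 1⟩
  set z := scJ ιE m x with hzdef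
  set k := scJ ιE m h with hkdef
  have hopen : IsOpen ((U (m + 1)) ×ˢ (Set.univ : Set (E m))) :=
    (sc_Uopen hU0 hU (m + 1)).prod isOpen_univ
  have hcont : ContinuousOn (fun t : ℝ => Df m (x + t • h) (ιE m h)) (Set.Icc 0 1) := by
    intro t ht
    have h1 : ContinuousAt (fun p : E (m + 1) × E m => Df m p.1 p.2) (x + t • h, ιE m h) :=
      (hTsc0 m).continuousAt (hopen.mem_nhds ⟨hseg t ht, trivial⟩)
    have h2 : Continuous (fun t : ℝ => ((x + t • h : E (m + 1)), ιE m h)) :=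
      (continuous_const.add (continuous_id.smul continuous_const)).prodMk continuous_const
    exact (h1.comp (f := fun t : ℝ => ((x + t • h : E (m + 1)), ιE m h))
      h2.continuousAt).continuousWithinAt
  have hint : IntervalIntegrable (fun t : ℝ => Df m (x + t • h) (ιE m h)) volume 0 1 := by
    apply ContinuousOn.intervalIntegrable
    rwa [Set.uIcc_of_le zero_le_one]
  have hz1 : ∀ t ∈ Set.Icc (0 : ℝ) 1, z + t • k ∈ U 1 := by
    intro t ht
    have := sc_memU1 hU m _ (hseg t ht)
    simpa [hzdef, hkdef, map_add, _root_.map_smul] using this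
  have hDeriv : ∀ t ∈ Set.uIcc (0 : ℝ) 1,
      HasDerivAt (fun s : ℝ => f 0 (ιE 0 (z + s • k)))
        (Df 0 (z + t • k) (ιE 0 k)) t := by
    intro t ht
    rw [Set.uIcc_of_le zero_le_one] at ht
    have hc : HasDerivAt (fun s : ℝ => z + s • k) k t := by
      simpa using ((hasDerivAt_id t).smul_const k).const_add z
    have := (sc_lvl0 happrox _ (hz1 t ht)).comp_hasDerivAt t hc
    exact this
  have hint0 : IntervalIntegrable
      (fun t : ℝ => Df 0 (z + t • k) (ιE 0 k)) volume 0 1 := by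
    apply ContinuousOn.intervalIntegrable
    rw [Set.uIcc_of_le zero_le_one]
    intro t ht
    have h1 : ContinuousAt (fun p : E 1 × E 0 => Df 0 p.1 p.2) (z + t • k, ιE 0 k) :=
      (hTsc0 0).continuousAt
        (((sc_Uopen hU0 hU 1).prod isOpen_univ).mem_nhds ⟨hz1 t ht, trivial⟩)
    have h2 : Continuous (fun t : ℝ => ((z + t • k : E 1), ιE 0 k)) :=
      (continuous_const.add (continuous_id.smul continuous_const)).prodMk continuous_const
    exact (h1.comp (f := fun t : ℝ => ((z + t • k : E 1), ιE 0 k))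
      h2.continuousAt).continuousWithinAt
  have hcongr : Set.EqOn (fun t : ℝ => scP ιF m (Df m (x + t • h) (ιE m h)))
      (fun t : ℝ => Df 0 (z + t • k) (ιE 0 k)) (Set.uIcc 0 1) := by
    intro t ht
    rw [Set.uIcc_of_le zero_le_one] at ht
    have hpd := sc_pf_Df hU hDfcompat m (x + t • h) (hseg t ht) (ιE m h)
    have e5 : scP ιE m (ιE m h) = ιE 0 (scJ ιE m h) := scP_succ_apply ιE m h
    simp only [hpd, e5, hzdef, hkdef, map_add, _root_.map_smul]
  have hmain : f m (ιE m (x + h)) - f m (ιE m x)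
      = ∫ t in (0 : ℝ)..1, Df m (x + t • h) (ιE m h) := by
    refine scP_inj ιF hinjF m ?_
    rw [map_sub, ← (scP ιF m).intervalIntegral_comp_comm hint]
    have hxm : ιE m (x + h) ∈ U m := by rw [hU m] at hxh; exact hxh
    have hxm' : ιE m x ∈ U m := by rw [hU m] at hx; exact hx
    rw [sc_pf_f hU hcompat m _ hxm, sc_pf_f hU hcompat m _ hxm',
      intervalIntegral.integral_congr hcongr,
      intervalIntegral.integral_eq_sub_of_hasDerivAt hDeriv hint0]
    have e3 : scP ιE m (ιE m (x + h)) = ιE 0 (scJ ιE m (x + h)) := scP_succ_apply ιE m (x + h)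
    have e4 : scP ιE m (ιE m x) = ιE 0 z := scP_succ_apply ιE m x
    rw [e3, e4]
    simp [hzdef, hkdef, map_add]
  rw [sub_eq_iff_eq_add, intervalIntegral.integral_sub hint intervalIntegrable_const,
    intervalIntegral.integral_const, hmain]
  simp


theorem sc_unif
    (hcompE : ∀ m, IsCompactOperator (ιE m))
    (hU0 : IsOpen (U 0)) (hU : ∀ m, U (m + 1) = ιE m ⁻¹' U m)
    (hTsc0 : ∀ m, ContinuousOn (fun p : E (m + 1) × E m => Df m p.1 p.2)
      (U (m + 1) ×ˢ Set.univ))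
    (m : ℕ) (x : E (m + 1)) (hx : x ∈ U (m + 1)) (ε : ℝ) (hε : 0 < ε) :
    ∃ δ > 0, Metric.ball x δ ⊆ U (m + 1) ∧ ∀ y ∈ Metric.ball x δ, ∀ k : E (m + 1), ‖k‖ ≤ 1 →
      ‖Df m y (ιE m k) - Df m x (ιE m k)‖ ≤ ε := by
  obtain ⟨K, hK, hKmem⟩ := hcompE m
  obtain ⟨r, hr, hball⟩ := Metric.mem_nhds_iff.1 hKmem
  have hopenU : IsOpen (U (m + 1)) := sc_Uopen hU0 hU (m + 1)
  set g : E (m + 1) × E m → ℝ := fun p => ‖Df m p.1 p.2 - Df m x p.2‖ with hg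
  have hgcont : ContinuousOn g (U (m + 1) ×ˢ (Set.univ : Set (E m))) := by
    apply ContinuousOn.norm
    exact (hTsc0 m).sub (((Df m x).continuous.comp continuous_snd).continuousOn)
  have hNopen : IsOpen ((U (m + 1) ×ˢ (Set.univ : Set (E m))) ∩ g ⁻¹' Set.Iio (ε * r / 2)) :=
    hgcont.isOpen_inter_preimage (hopenU.prod isOpen_univ) isOpen_Iio
  have hsub : ({x} ×ˢ K) ⊆ (U (m + 1) ×ˢ (Set.univ : Set (E m))) ∩ g ⁻¹' Set.Iio (ε * r / 2) := by
    rintro ⟨a, b⟩ ⟨ha, hb⟩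
    simp only [Set.mem_singleton_iff] at ha
    subst ha
    refine ⟨⟨hx, trivial⟩, ?_⟩
    simp only [hg, Set.mem_preimage, Set.mem_Iio, sub_self, norm_zero]
    positivity
  obtain ⟨u, v, hu, hv, hxu, hKv, huv⟩ :=
    generalized_tube_lemma isCompact_singleton hK hNopen hsub
  obtain ⟨δ, hδ, hδsub⟩ := Metric.isOpen_iff.1 (hu.inter hopenU) x
    ⟨hxu rfl, hx⟩
  refine ⟨δ, hδ, fun y hy => (hδsub hy).2, ?_⟩
  intro y hy k hk
  have hyu : y ∈ u := (hδsub hy).1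
  have hkK : ιE m ((r / 2) • k) ∈ K := by
    apply hball
    rw [Metric.mem_ball, dist_zero_right, norm_smul, Real.norm_eq_abs,
      abs_of_pos (by linarith : (0:ℝ) < r / 2)]
    nlinarith [norm_nonneg k]
  have hmem := huv (Set.mk_mem_prod hyu (hKv hkK))
  have hlt : ‖Df m y (ιE m ((r / 2) • k)) - Df m x (ιE m ((r / 2) • k))‖ < ε * r / 2 :=
    hmem.2
  have heq : Df m y (ιE m ((r / 2) • k)) - Df m x (ιE m ((r / 2) • k))
      = (r / 2) • (Df m y (ιE m k) - Df m x (ιE m k)) := by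
    simp [_root_.map_smul, smul_sub]
  rw [heq, norm_smul, Real.norm_eq_abs, abs_of_pos (by linarith : (0:ℝ) < r / 2)] at hlt
  nlinarith [norm_nonneg (Df m y (ιE m k) - Df m x (ιE m k))]


end SCMain

/-- An sc-structure is modelled by a nested sequence of Banach spaces
`E 0 ⊃ E 1 ⊃ ⋯`. -/
theorem stmt4
    (E F : ℕ → Type) [∀ m, NormedAddCommGroup (E m)] [∀ m, NormedSpace ℝ (E m)]
    [∀ m, NormedAddCommGroup (F m)] [∀ m, NormedSpace ℝ (F m)]
    [∀ m, CompleteSpace (E m)] [∀ m, CompleteSpace (F m)]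
    (ιE : ∀ m, E (m + 1) →L[ℝ] E m) (ιF : ∀ m, F (m + 1) →L[ℝ] F m)
    (hinjE : ∀ m, Function.Injective (ιE m)) (hinjF : ∀ m, Function.Injective (ιF m))
    (hcompE : ∀ m, IsCompactOperator (ιE m)) (hcompF : ∀ m, IsCompactOperator (ιF m))
    (U : ∀ m, Set (E m)) (hU0 : IsOpen (U 0)) (hU : ∀ m, U (m + 1) = ιE m ⁻¹' U m)
    (f : ∀ m, E m → F m)
    (hcompat : ∀ m, ∀ x ∈ U (m + 1), ιF m (f (m + 1) x) = f m (ιE m x))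
    (hsc0 : ∀ m, ContinuousOn (f m) (U m))
    (Df : ∀ m, E (m + 1) → E m →L[ℝ] F m)
    (hDfcompat : ∀ m, ∀ x ∈ U (m + 2), ∀ h : E (m + 1),
      ιF m (Df (m + 1) x h) = Df m (ιE (m + 1) x) (ιE m h))
    (happrox : ∀ x ∈ U 1,
      (fun h : E 1 => f 0 (ιE 0 x + ιE 0 h) - f 0 (ιE 0 x) - Df 0 x (ιE 0 h))
        =o[nhds (0 : E 1)] fun h : E 1 => h)
    (hTsc0 : ∀ m, ContinuousOn (fun p : E (m + 1) × E m => Df m p.1 p.2)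
      (U (m + 1) ×ˢ Set.univ)) :
    ∀ m, (∀ x ∈ U (m + 1),
        HasFDerivAt (fun y : E (m + 1) => f m (ιE m y)) ((Df m x).comp (ιE m)) x) ∧
      ContinuousOn (fun x : E (m + 1) => (Df m x).comp (ιE m)) (U (m + 1)) := by
  intro m
  constructor
  · intro x hx
    rw [hasFDerivAt_iff_isLittleO_nhds_zero, isLittleO_iff]
    intro c hc
    obtain ⟨δ, hδ, hball, hbd⟩ := sc_unif hcompE hU0 hU hTsc0 m x hx c hc
    filter_upwards [Metric.ball_mem_nhds 0 hδ] with h hh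
    rw [Metric.mem_ball, dist_zero_right] at hh
    have hseg : ∀ t ∈ Set.Icc (0 : ℝ) 1, x + t • h ∈ U (m + 1) := by
      intro t ht
      apply hball
      rw [Metric.mem_ball, dist_eq_norm, add_sub_cancel_left, norm_smul, Real.norm_eq_abs,
        abs_of_nonneg ht.1]
      calc t * ‖h‖ ≤ 1 * ‖h‖ := mul_le_mul_of_nonneg_right ht.2 (norm_nonneg h)
        _ < δ := by simpa using hh
    have hkey := sc_key hinjF hU0 hU hcompat hDfcompat happrox hTsc0 m x h hseg
    rcases eq_or_ne h 0 with rfl | hne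
    · simp
    have hbound : ∀ t ∈ Set.uIoc (0 : ℝ) 1,
        ‖Df m (x + t • h) (ιE m h) - Df m x (ιE m h)‖ ≤ c * ‖h‖ := by
      intro t ht
      rw [Set.uIoc_of_le zero_le_one] at ht
      have hyball : x + t • h ∈ Metric.ball x δ := by
        rw [Metric.mem_ball, dist_eq_norm, add_sub_cancel_left, norm_smul, Real.norm_eq_abs,
          abs_of_nonneg ht.1.le]
        calc t * ‖h‖ ≤ 1 * ‖h‖ := mul_le_mul_of_nonneg_right ht.2 (norm_nonneg h)
          _ < δ := by simpa using hh
      have hunit : ‖(‖h‖⁻¹ • h : E (m + 1))‖ ≤ 1 := by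
        rw [norm_smul, Real.norm_eq_abs, abs_of_nonneg (by positivity)]
        rw [inv_mul_cancel₀ (norm_ne_zero_iff.2 hne)]
      have := hbd (x + t • h) hyball (‖h‖⁻¹ • h) hunit
      have heq : Df m (x + t • h) (ιE m h) - Df m x (ιE m h)
          = ‖h‖ • (Df m (x + t • h) (ιE m (‖h‖⁻¹ • h)) - Df m x (ιE m (‖h‖⁻¹ • h))) := by
        simp [_root_.map_smul, smul_sub, smul_smul,
          mul_inv_cancel₀ (norm_ne_zero_iff.2 hne)]
      rw [heq, norm_smul, Real.norm_eq_abs, abs_of_nonneg (norm_nonneg h), mul_comm]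
      exact mul_le_mul_of_nonneg_right this (norm_nonneg h)
    calc ‖f m (ιE m (x + h)) - f m (ιE m x) - (Df m x).comp (ιE m) h‖
        = ‖∫ t in (0 : ℝ)..1, (Df m (x + t • h) (ιE m h) - Df m x (ιE m h))‖ := by
          rw [ContinuousLinearMap.comp_apply, hkey]
      _ ≤ c * ‖h‖ * |1 - 0| := intervalIntegral.norm_integral_le_of_norm_le_const hbound
      _ = c * ‖h‖ := by simp
  · intro x hx
    have hCA : ContinuousAt (fun x : E (m + 1) => (Df m x).comp (ιE m)) x := by
      rw [Metric.continuousAt_iff]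
      intro ε hε
      obtain ⟨δ, hδ, hball, hbd⟩ := sc_unif hcompE hU0 hU hTsc0 m x hx (ε / 2) (by linarith)
      refine ⟨δ, hδ, fun {y} hy => ?_⟩
      rw [dist_eq_norm]
      have hyb : y ∈ Metric.ball x δ := by rwa [Metric.mem_ball]
      have hop : ‖(Df m y).comp (ιE m) - (Df m x).comp (ιE m)‖ ≤ ε / 2 := by
        apply ContinuousLinearMap.opNorm_le_bound _ (by linarith)
        intro w
        rcases eq_or_ne w 0 with rfl | hw
        · simp
        have hunit : ‖(‖w‖⁻¹ • w : E (m + 1))‖ ≤ 1 := by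
          rw [norm_smul, Real.norm_eq_abs, abs_of_nonneg (by positivity)]
          rw [inv_mul_cancel₀ (norm_ne_zero_iff.2 hw)]
        have hb := hbd y hyb (‖w‖⁻¹ • w) hunit
        have heq : ((Df m y).comp (ιE m) - (Df m x).comp (ιE m)) w
            = ‖w‖ • (Df m y (ιE m (‖w‖⁻¹ • w)) - Df m x (ιE m (‖w‖⁻¹ • w))) := by
          simp only [ContinuousLinearMap.sub_apply, ContinuousLinearMap.comp_apply]
          simp [_root_.map_smul, smul_sub, smul_smul,
            mul_inv_cancel₀ (norm_ne_zero_iff.2 hw)]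
        rw [heq, norm_smul, Real.norm_eq_abs, abs_of_nonneg (norm_nonneg w), mul_comm]
        exact mul_le_mul_of_nonneg_right hb (norm_nonneg w)
      calc ‖(Df m y).comp (ιE m) - (Df m x).comp (ιE m)‖ ≤ ε / 2 := hop
        _ < ε := by linarith
    exact hCA.continuousWithinAt
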